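/- For every effective co-number function M and every real number t, there is exactly one continuous generating function m of M with m(0) = t. -/

import Mathlib

/-- A counting vector of dimension `N`: nonnegative entries summing to `N`. -/
def IsCountingVector {N : ℕ} (P : Fin N → ℝ) : Prop :=
  (∀ i, 0 ≤ P i) ∧ ∑ i, P i = N

/-- An effective co-number function (co-ENF): additive under concatenation,
symmetric, continuous on each `W_N`, monotone under cumulation (M⁺), and with
boundary values `M(N,0,...,0) = N − 1`. -/
def IsCoENF (M : ∀ N : ℕ, (Fin N → ℝ) → ℝ) : Prop :=
  -- (A) additivity
  (∀ (N K : ℕ) (P : Fin N → ℝ) (Q : Fin K → ℝ),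
    IsCountingVector P → IsCountingVector Q →
    M (N + K) (Fin.append P Q) = M N P + M K Q) ∧
  -- (S) symmetry
  (∀ (N : ℕ) (P : Fin N → ℝ), IsCountingVector P →
    ∀ σ : Equiv.Perm (Fin N), M N (P ∘ σ) = M N P) ∧
  -- (C) continuity on each W_N
  (∀ N : ℕ, ContinuousOn (M N) {P : Fin N → ℝ | IsCountingVector P}) ∧
  -- (M⁺) cumulation monotonicity
  (∀ (N : ℕ) (P : Fin N → ℝ), IsCountingVector P →
    ∀ i j : Fin N, i ≠ j → P i ≤ P j →
    ∀ ε : ℝ, 0 < ε → ε ≤ P i → ε ≤ N - P j →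
      M N P ≤ M N (Function.update (Function.update P i (P i - ε)) j (P j + ε))) ∧
  -- (co-B2) boundary values
  (∀ N : ℕ, M (N + 1) (fun k => if k = 0 then ((N + 1 : ℕ) : ℝ) else 0) = N)

namespace CoENFAux

variable (M : ∀ N : ℕ, (Fin N → ℝ) → ℝ)

/-- `M` applied to a list. -/
def Ml (l : List ℝ) : ℝ := M l.length l.get

/-- counting list -/
def CL (l : List ℝ) : Prop := (∀ x ∈ l, 0 ≤ x) ∧ l.sum = (l.length : ℝ)

lemma M_congr {n k : ℕ} (h : n = k) (P : Fin n → ℝ) :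
    M k (fun i => P (Fin.cast h.symm i)) = M n P := by subst h; rfl

lemma Ml_ofFn {n : ℕ} (P : Fin n → ℝ) : Ml M (List.ofFn P) = M n P := by
  have h : n = (List.ofFn P).length := (List.length_ofFn).symm
  rw [Ml, ← M_congr M h P]
  congr 1
  funext i
  rw [List.get_ofFn]

lemma CL_get {l : List ℝ} (h : CL l) : IsCountingVector l.get := by
  constructor
  · intro i; exact h.1 _ (List.get_mem l i)
  · have : ∑ i, l.get i = (List.ofFn l.get).sum := (List.sum_ofFn).symm
    rw [this, List.ofFn_get]; exact h.2

lemma exists_comp_eq_of_perm : ∀ {n : ℕ} (f g : Fin n → ℝ),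
    (List.ofFn f).Perm (List.ofFn g) → ∃ σ : Equiv.Perm (Fin n), f ∘ σ = g := by
  intro n
  induction n with
  | zero => intro f g _; exact ⟨1, funext fun i => i.elim0⟩
  | succ n ih =>
    intro f g hp
    have hg0 : g 0 ∈ List.ofFn f := by
      rw [hp.mem_iff, List.mem_ofFn]; exact ⟨0, rfl⟩
    rw [List.mem_ofFn] at hg0
    obtain ⟨i, hi⟩ := hg0
    set τ : Equiv.Perm (Fin (n+1)) := Equiv.swap 0 i with hτ
    have hfτ : (f ∘ τ) 0 = g 0 := by simp [hτ, Equiv.swap_apply_left, hi]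
    have hperm : (List.ofFn (f ∘ τ)).Perm (List.ofFn g) :=
      (τ.ofFn_comp_perm f).trans hp
    rw [List.ofFn_succ, List.ofFn_succ, hfτ] at hperm
    have hperm' := hperm.cons_inv
    obtain ⟨σ', hσ'⟩ := ih _ _ hperm'
    refine ⟨(Equiv.Perm.decomposeFin.symm (0, σ')).trans τ, ?_⟩
    · funext x
      simp only [Function.comp_apply, Equiv.trans_apply]
      induction x using Fin.cases with
      | zero =>
        rw [Equiv.Perm.decomposeFin_symm_apply_zero]
        exact hfτ
      | succ j =>
        rw [Equiv.Perm.decomposeFin_symm_apply_succ]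
        simp only [Equiv.swap_self, Equiv.refl_apply]
        have := congrFun hσ' j
        simpa using this

lemma Ml_perm (hS : ∀ (N : ℕ) (P : Fin N → ℝ), IsCountingVector P →
      ∀ σ : Equiv.Perm (Fin N), M N (P ∘ σ) = M N P)
    {l l' : List ℝ} (hl : CL l) (hp : l.Perm l') : Ml M l = Ml M l' := by
  have hlen : l'.length = l.length := hp.length_eq.symm
  set g : Fin l.length → ℝ := fun i => l'.get (Fin.cast hlen.symm i) with hg
  have hofg : List.ofFn g = l' := by
    apply List.ext_get (by simp [hlen])
    intro i h1 h2
    simp [hg, List.get_ofFn]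
  have hofl : List.ofFn l.get = l := List.ofFn_get l
  have hp2 : (List.ofFn l.get).Perm (List.ofFn g) := by rw [hofg, hofl]; exact hp
  obtain ⟨σ, hσ⟩ := exists_comp_eq_of_perm _ _ hp2
  have h1 : Ml M l' = M l.length g := by
    rw [Ml, ← M_congr M hlen.symm g]
    congr 1
  rw [h1, ← hσ, hS _ _ (CL_get hl) σ, Ml]



section Basic

lemma Ml_append (hA : ∀ (N K : ℕ) (P : Fin N → ℝ) (Q : Fin K → ℝ),
    IsCountingVector P → IsCountingVector Q →
    M (N + K) (Fin.append P Q) = M N P + M K Q) {l₁ l₂ : List ℝ} (h₁ : CL l₁) (h₂ : CL l₂) :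
    Ml M (l₁ ++ l₂) = Ml M l₁ + Ml M l₂ := by
  have h := hA l₁.length l₂.length l₁.get l₂.get (CL_get h₁) (CL_get h₂)
  calc Ml M (l₁ ++ l₂) = Ml M (List.ofFn (Fin.append l₁.get l₂.get)) := by
        rw [List.ofFn_fin_append, List.ofFn_get, List.ofFn_get]
    _ = M (l₁.length + l₂.length) (Fin.append l₁.get l₂.get) := Ml_ofFn M _
    _ = Ml M l₁ + Ml M l₂ := h

lemma Ml_nil (hA : ∀ (N K : ℕ) (P : Fin N → ℝ) (Q : Fin K → ℝ),
    IsCountingVector P → IsCountingVector Q →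
    M (N + K) (Fin.append P Q) = M N P + M K Q) : Ml M [] = 0 := by
  have hcv : IsCountingVector (fun i : Fin 0 => (0:ℝ)) := ⟨fun i => i.elim0, by simp⟩
  have h := hA 0 0 _ _ hcv hcv
  have h2 : Fin.append (fun i : Fin 0 => (0:ℝ)) (fun i : Fin 0 => (0:ℝ))
      = (fun i : Fin (0+0) => (0:ℝ)) := by funext i; exact i.elim0
  rw [h2] at h
  have h3 : M 0 (fun _ : Fin 0 => (0:ℝ)) = 0 := by linarith [h]
  have h4 : Ml M [] = M 0 (fun _ : Fin 0 => (0:ℝ)) := by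
    show M 0 _ = M 0 _
    congr 1; funext i; exact i.elim0
  rw [h4, h3]

lemma Ml_one (hB : ∀ N : ℕ, M (N + 1) (fun k => if k = 0 then ((N + 1 : ℕ) : ℝ) else 0) = N) : Ml M [(1:ℝ)] = 0 := by
  have h := hB 0
  have h2 : List.ofFn (fun k : Fin (0+1) => if k = 0 then ((0 + 1 : ℕ) : ℝ) else 0)
      = [(1:ℝ)] := by
    simp [List.ofFn_succ]
  rw [← h2, Ml_ofFn M _, h]; simp

lemma Ml_top (hB : ∀ N : ℕ, M (N + 1) (fun k => if k = 0 then ((N + 1 : ℕ) : ℝ) else 0) = N) (n : ℕ) : Ml M (((n:ℝ) + 1) :: List.replicate n 0) = n := by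
  have h := hB n
  have h2 : List.ofFn (fun k : Fin (n+1) => if k = 0 then ((n + 1 : ℕ) : ℝ) else 0)
      = ((n:ℝ) + 1) :: List.replicate n 0 := by
    rw [List.ofFn_succ]
    congr 1
    · simp
    · rw [show (fun i : Fin n => if i.succ = 0 then ((n + 1 : ℕ) : ℝ) else 0)
          = (fun _ : Fin n => (0:ℝ)) from funext fun i => by simp [Fin.succ_ne_zero],
        List.ofFn_const]
  rw [← h2, Ml_ofFn M _, h]

end Basic

/-- filler list of length `n` with total sum `r` -/
noncomputable def padl (n : ℕ) (r : ℝ) : List ℝ := List.replicate n (r / n)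

lemma padl_nonneg {n : ℕ} {r : ℝ} (hr : 0 ≤ r) : ∀ x ∈ padl n r, 0 ≤ x := by
  intro x hx
  have : x = r / n := List.eq_of_mem_replicate (by simpa [padl] using hx)
  rw [this]; positivity

lemma padl_sum {n : ℕ} (hn : n ≠ 0) (r : ℝ) : (padl n r).sum = r := by
  simp only [padl, List.sum_replicate, nsmul_eq_mul]
  field_simp

lemma padl_length (n : ℕ) (r : ℝ) : (padl n r).length = n := by
  simp [padl]


lemma CL_cons2 {a b : ℝ} {l : List ℝ} (ha : 0 ≤ a) (hb : 0 ≤ b)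
    (hl : ∀ x ∈ l, 0 ≤ x) (e : a + b + l.sum = 2 + l.length) : CL (a :: b :: l) := by
  constructor
  · intro x hx
    rcases List.mem_cons.mp hx with rfl | hx2
    · exact ha
    · rcases List.mem_cons.mp hx2 with rfl | hx3
      · exact hb
      · exact hl _ hx3
  · simp only [List.sum_cons, List.length_cons]
    push_cast
    linarith

lemma CL_append {l₁ l₂ : List ℝ} (h₁ : CL l₁) (h₂ : CL l₂) : CL (l₁ ++ l₂) := by
  constructor
  · intro x hx
    rcases List.mem_append.mp hx with h | h
    · exact h₁.1 _ h
    · exact h₂.1 _ h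
  · rw [List.sum_append, List.length_append, h₁.2, h₂.2]
    push_cast
    ring

section Theta

variable (hA : ∀ (N K : ℕ) (P : Fin N → ℝ) (Q : Fin K → ℝ),
    IsCountingVector P → IsCountingVector Q →
    M (N + K) (Fin.append P Q) = M N P + M K Q)
  (hS : ∀ (N : ℕ) (P : Fin N → ℝ), IsCountingVector P →
    ∀ σ : Equiv.Perm (Fin N), M N (P ∘ σ) = M N P)

include hA hS in
lemma sub_indep {a b a' b' : ℝ} (ha : 0 ≤ a) (hb : 0 ≤ b) (ha' : 0 ≤ a') (hb' : 0 ≤ b')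
    (hab : a + b = a' + b') {l₁ l₂ : List ℝ}
    (h₁ : ∀ x ∈ l₁, 0 ≤ x) (h₂ : ∀ x ∈ l₂, 0 ≤ x)
    (e₁ : a + b + l₁.sum = 2 + l₁.length) (e₂ : a + b + l₂.sum = 2 + l₂.length) :
    Ml M (a::b::l₁) - Ml M (a'::b'::l₁) = Ml M (a::b::l₂) - Ml M (a'::b'::l₂) := by
  have c1 : CL (a::b::l₁) := CL_cons2 ha hb h₁ e₁
  have c2 : CL (a'::b'::l₁) := CL_cons2 ha' hb' h₁ (by rw [← hab]; exact e₁)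
  have c3 : CL (a::b::l₂) := CL_cons2 ha hb h₂ e₂
  have c4 : CL (a'::b'::l₂) := CL_cons2 ha' hb' h₂ (by rw [← hab]; exact e₂)
  have e := Ml_append M hA c1 c4
  have e' := Ml_append M hA c2 c3
  have p : ((a::b::l₁) ++ (a'::b'::l₂)).Perm ((a'::b'::l₁) ++ (a::b::l₂)) := by
    apply Multiset.coe_eq_coe.mp
    show ((a::b::l₁ : List ℝ) : Multiset ℝ) + ((a'::b'::l₂ : List ℝ) : Multiset ℝ)
        = ((a'::b'::l₁ : List ℝ) : Multiset ℝ) + ((a::b::l₂ : List ℝ) : Multiset ℝ)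
    simp only [← Multiset.cons_coe, ← Multiset.singleton_add]
    abel
  have hp := Ml_perm M hS (CL_append c1 c4) p
  rw [e, e'] at hp
  linarith

/-- the fundamental 2-cocycle of `M` -/
noncomputable def θ (a b : ℝ) : ℝ :=
  Ml M (a :: b :: padl (⌈a+b⌉₊+1) ((⌈a+b⌉₊:ℝ) + 3 - (a+b)))
  - Ml M ((a+b) :: 0 :: padl (⌈a+b⌉₊+1) ((⌈a+b⌉₊:ℝ) + 3 - (a+b)))

include hA hS in
lemma theta_frame {a b : ℝ} (ha : 0 ≤ a) (hb : 0 ≤ b) {l : List ℝ}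
    (hl : ∀ x ∈ l, 0 ≤ x) (el : a + b + l.sum = 2 + l.length) :
    θ M a b = Ml M (a::b::l) - Ml M ((a+b)::0::l) := by
  have hceil : a + b ≤ (⌈a+b⌉₊ : ℝ) := Nat.le_ceil _
  have hr : (0:ℝ) ≤ (⌈a+b⌉₊:ℝ) + 3 - (a+b) := by linarith
  have hn : (⌈a+b⌉₊+1 : ℕ) ≠ 0 := Nat.succ_ne_zero _
  rw [θ]
  apply sub_indep M hA hS ha hb (by positivity) le_rfl (by ring)
    (padl_nonneg hr) hl ?_ el
  rw [padl_sum hn, padl_length]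
  push_cast
  ring

include hA hS in
lemma theta_zero_left {b : ℝ} (hb : 0 ≤ b) : θ M 0 b = 0 := by
  set n : ℕ := ⌈b⌉₊+1 with hn
  set l : List ℝ := padl n ((n:ℝ) + 2 - b) with hldef
  have hrce : b ≤ (⌈b⌉₊ : ℝ) := Nat.le_ceil _
  have hnn : (n:ℝ) = (⌈b⌉₊:ℝ) + 1 := by rw [hn]; push_cast; ring
  have hr : (0:ℝ) ≤ (n:ℝ) + 2 - b := by rw [hnn]; linarith
  have hl : ∀ x ∈ l, 0 ≤ x := padl_nonneg hr
  have el : 0 + b + l.sum = 2 + l.length := by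
    rw [hldef, padl_sum (Nat.succ_ne_zero _), padl_length]
    ring
  have h := theta_frame M hA hS le_rfl hb hl el
  rw [zero_add] at h
  have cl : CL (0::b::l) := CL_cons2 le_rfl hb hl el
  have hperm := Ml_perm M hS cl (List.Perm.swap b 0 l)
  rw [h, hperm]
  ring

lemma theta_zero_right (a : ℝ) : θ M a 0 = 0 := by
  simp only [θ, add_zero]
  ring

include hA hS in
lemma theta_cocycle {a b c : ℝ} (ha : 0 ≤ a) (hb : 0 ≤ b) (hc : 0 ≤ c) :
    θ M a b + θ M (a+b) c = θ M a (b+c) + θ M b c := by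
  set s : ℝ := a+b+c with hs
  set k : ℕ := ⌈s⌉₊+1 with hk
  set l : List ℝ := padl k ((k:ℝ) + 3 - s) with hldef
  have hsle : s ≤ (⌈s⌉₊ : ℝ) := Nat.le_ceil _
  have hkk : (k:ℝ) = (⌈s⌉₊:ℝ) + 1 := by rw [hk]; push_cast; ring
  have hr : (0:ℝ) ≤ (k:ℝ) + 3 - s := by rw [hkk]; linarith
  have hl : ∀ x ∈ l, 0 ≤ x := padl_nonneg hr
  have hlsum : l.sum = (k:ℝ) + 3 - s := by rw [hldef]; exact padl_sum (Nat.succ_ne_zero _) _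
  have hllen : (l.length : ℝ) = (k:ℝ) := by rw [hldef, padl_length]
  have hcl : ∀ x ∈ (c::l), 0 ≤ x := by
    intro x hx; rcases List.mem_cons.mp hx with rfl | hx2; exacts [hc, hl _ hx2]
  have h0l : ∀ x ∈ ((0:ℝ)::l), 0 ≤ x := by
    intro x hx; rcases List.mem_cons.mp hx with rfl | hx2; exacts [le_rfl, hl _ hx2]
  have hal : ∀ x ∈ (a::l), 0 ≤ x := by
    intro x hx; rcases List.mem_cons.mp hx with rfl | hx2; exacts [ha, hl _ hx2]
  have h1 : θ M a b = Ml M (a::b::c::l) - Ml M ((a+b)::0::c::l) := by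
    apply theta_frame M hA hS ha hb hcl
    simp only [List.sum_cons, List.length_cons]
    rw [hlsum]
    push_cast [hllen]
    linarith
  have h2 : Ml M ((a+b)::0::c::l) = Ml M ((a+b)::c::0::l) := by
    apply Ml_perm M hS
    · apply CL_cons2 (by positivity) le_rfl hcl
      simp only [List.sum_cons, List.length_cons]
      rw [hlsum]
      push_cast [hllen]
      linarith
    · exact List.Perm.cons _ (List.Perm.swap c 0 l)
  have h3 : θ M (a+b) c = Ml M ((a+b)::c::0::l) - Ml M ((a+b+c)::0::0::l) := by
    have := theta_frame M hA hS (a := a+b) (b := c) (by positivity) hc h0l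
      (l := (0:ℝ)::l) ?_
    · simpa using this
    · simp only [List.sum_cons, List.length_cons]
      rw [hlsum]
      push_cast [hllen]
      linarith
  have h4 : Ml M (a::b::c::l) = Ml M (b::c::a::l) := by
    apply Ml_perm M hS
    · apply CL_cons2 ha hb hcl
      simp only [List.sum_cons, List.length_cons]
      rw [hlsum]
      push_cast [hllen]
      linarith
    · apply Multiset.coe_eq_coe.mp
      simp only [← Multiset.cons_coe, ← Multiset.singleton_add]
      abel
  have h5 : θ M b c = Ml M (b::c::a::l) - Ml M ((b+c)::0::a::l) := by
    apply theta_frame M hA hS hb hc hal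
    simp only [List.sum_cons, List.length_cons]
    rw [hlsum]
    push_cast [hllen]
    linarith
  have h6 : Ml M ((b+c)::0::a::l) = Ml M (a::(b+c)::0::l) := by
    apply Ml_perm M hS
    · apply CL_cons2 (by positivity) le_rfl hal
      simp only [List.sum_cons, List.length_cons]
      rw [hlsum]
      push_cast [hllen]
      linarith
    · apply Multiset.coe_eq_coe.mp
      simp only [← Multiset.cons_coe, ← Multiset.singleton_add]
      abel
  have h7 : θ M a (b+c) = Ml M (a::(b+c)::0::l) - Ml M ((a+(b+c))::0::0::l) := by
    apply theta_frame M hA hS ha (by positivity) h0l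
    simp only [List.sum_cons, List.length_cons]
    rw [hlsum]
    push_cast [hllen]
    linarith
  have hassoc : a + (b+c) = a+b+c := by ring
  rw [hassoc] at h7
  linarith


noncomputable def fillv (n : ℕ) (s : ℝ) : ℝ := ((n:ℝ) + 2 - s) / n

noncomputable def Vmap (n : ℕ) (p : ℝ × ℝ) : Fin (n+2) → ℝ :=
  fun i => if (i:ℕ) = 0 then p.1 else if (i:ℕ) = 1 then p.2 else fillv n (p.1 + p.2)

noncomputable def Wmap (n : ℕ) (p : ℝ × ℝ) : Fin (n+2) → ℝ :=
  fun i => if (i:ℕ) = 0 then p.1 + p.2 else if (i:ℕ) = 1 then 0 else fillv n (p.1 + p.2)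

lemma padl_eq_replicate_fillv (n : ℕ) (s : ℝ) :
    padl n ((n:ℝ) + 2 - s) = List.replicate n (fillv n s) := rfl

lemma ofFn_V (n : ℕ) (a b : ℝ) :
    List.ofFn (Vmap n (a,b)) = a :: b :: padl n ((n:ℝ) + 2 - (a+b)) := by
  rw [padl_eq_replicate_fillv, List.ofFn_succ, List.ofFn_succ, ← List.ofFn_const n (fillv n (a+b))]
  congr 1

lemma ofFn_W (n : ℕ) (a b : ℝ) :
    List.ofFn (Wmap n (a,b)) = (a+b) :: (0:ℝ) :: padl n ((n:ℝ) + 2 - (a+b)) := by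
  rw [padl_eq_replicate_fillv, List.ofFn_succ, List.ofFn_succ, ← List.ofFn_const n (fillv n (a+b))]
  congr 1

lemma fillv_nonneg {n : ℕ} {s : ℝ} (h : s ≤ (n:ℝ) + 2) : 0 ≤ fillv n s := by
  have h2 : (0:ℝ) ≤ (n:ℝ) + 2 - s := by linarith
  exact div_nonneg h2 (Nat.cast_nonneg n)

lemma sum_Vmap (n : ℕ) (a b : ℝ) :
    ∑ i, Vmap n (a,b) i = a + b + (n:ℝ) * fillv n (a+b) := by
  rw [Fin.sum_univ_succ, Fin.sum_univ_succ]
  simp [Vmap, Fin.val_succ, Finset.sum_const, nsmul_eq_mul]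
  try ring

lemma sum_Wmap (n : ℕ) (a b : ℝ) :
    ∑ i, Wmap n (a,b) i = a + b + (n:ℝ) * fillv n (a+b) := by
  rw [Fin.sum_univ_succ, Fin.sum_univ_succ]
  simp [Wmap, Fin.val_succ, Finset.sum_const, nsmul_eq_mul]
  try ring

lemma mul_fillv {n : ℕ} (hn : n ≠ 0) (s : ℝ) : (n:ℝ) * fillv n s = (n:ℝ) + 2 - s := by
  rw [fillv]
  field_simp

lemma Vmap_counting {n : ℕ} (hn : n ≠ 0) {q : ℝ × ℝ} (h1 : 0 ≤ q.1) (h2 : 0 ≤ q.2)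
    (h3 : q.1 + q.2 ≤ (n:ℝ) + 2) : Vmap n q ∈ {P : Fin (n+2) → ℝ | IsCountingVector P} := by
  constructor
  · intro i
    simp only [Vmap]
    split_ifs
    · exact h1
    · exact h2
    · exact fillv_nonneg h3
  · show ∑ i, Vmap n (q.1, q.2) i = _
    rw [sum_Vmap, mul_fillv hn]
    push_cast
    ring

lemma Wmap_counting {n : ℕ} (hn : n ≠ 0) {q : ℝ × ℝ} (h1 : 0 ≤ q.1) (h2 : 0 ≤ q.2)
    (h3 : q.1 + q.2 ≤ (n:ℝ) + 2) : Wmap n q ∈ {P : Fin (n+2) → ℝ | IsCountingVector P} := by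
  constructor
  · intro i
    simp only [Wmap]
    split_ifs
    · positivity
    · exact le_rfl
    · exact fillv_nonneg h3
  · show ∑ i, Wmap n (q.1, q.2) i = _
    rw [sum_Wmap, mul_fillv hn]
    push_cast
    ring

include hA hS in
lemma theta_fixed {n : ℕ} (hn : n ≠ 0) {a b : ℝ} (ha : 0 ≤ a) (hb : 0 ≤ b)
    (hab : a + b ≤ (n:ℝ) + 2) :
    θ M a b = M (n+2) (Vmap n (a,b)) - M (n+2) (Wmap n (a,b)) := by
  have hr : (0:ℝ) ≤ (n:ℝ) + 2 - (a+b) := by linarith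
  have h := theta_frame M hA hS ha hb (l := padl n ((n:ℝ)+2-(a+b))) (padl_nonneg hr) ?_
  · rw [h, ← ofFn_V, ← ofFn_W, Ml_ofFn, Ml_ofFn]
  · rw [padl_sum hn, padl_length]
    ring

include hA hS in
lemma contOn_theta (hC : ∀ N : ℕ, ContinuousOn (M N) {P : Fin N → ℝ | IsCountingVector P}) :
    ContinuousOn (fun p : ℝ × ℝ => θ M p.1 p.2) {p : ℝ × ℝ | 0 ≤ p.1 ∧ 0 ≤ p.2} := by
  intro p hp
  set Q : Set (ℝ × ℝ) := {p : ℝ × ℝ | 0 ≤ p.1 ∧ 0 ≤ p.2} with hQ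
  set n : ℕ := ⌈p.1 + p.2⌉₊ + 1 with hn
  set S' : Set (ℝ × ℝ) := {q : ℝ × ℝ | 0 ≤ q.1 ∧ 0 ≤ q.2 ∧ q.1 + q.2 ≤ (n:ℝ) + 2} with hS'
  set F : ℝ × ℝ → ℝ := fun q => M (n+2) (Vmap n q) - M (n+2) (Wmap n q) with hF
  have hVcont : Continuous (fun q : ℝ × ℝ => Vmap n q) := by
    apply continuous_pi; intro i
    simp only [Vmap, fillv]
    split_ifs <;> fun_prop
  have hWcont : Continuous (fun q : ℝ × ℝ => Wmap n q) := by
    apply continuous_pi; intro i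
    simp only [Wmap, fillv]
    split_ifs <;> fun_prop
  have hFcont : ContinuousOn F S' := by
    apply ContinuousOn.sub
    · exact (hC (n+2)).comp hVcont.continuousOn
        (fun q hq => Vmap_counting (Nat.succ_ne_zero _) hq.1 hq.2.1 hq.2.2)
    · exact (hC (n+2)).comp hWcont.continuousOn
        (fun q hq => Wmap_counting (Nat.succ_ne_zero _) hq.1 hq.2.1 hq.2.2)
  set U : Set (ℝ × ℝ) := {q : ℝ × ℝ | q.1 + q.2 < (n:ℝ) + 2} with hU
  have hUopen : IsOpen U := isOpen_lt (by fun_prop) continuous_const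
  have hpU : p ∈ U := by
    have : p.1 + p.2 ≤ (⌈p.1 + p.2⌉₊ : ℝ) := Nat.le_ceil _
    have hnn : ((n:ℕ):ℝ) = (⌈p.1+p.2⌉₊:ℝ) + 1 := by rw [hn]; push_cast; ring
    simp only [hU, Set.mem_setOf_eq]
    linarith
  have hEq : ∀ q ∈ Q ∩ U, (fun p : ℝ × ℝ => θ M p.1 p.2) q = F q := by
    rintro q ⟨hq1, hq2⟩
    exact theta_fixed M hA hS (Nat.succ_ne_zero _) hq1.1 hq1.2 (le_of_lt hq2)
  have hpQU : p ∈ Q ∩ U := ⟨hp, hpU⟩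
  have h1 : ContinuousWithinAt F (Q ∩ U) p :=
    (hFcont.mono (fun q hq => ⟨hq.1.1, hq.1.2, le_of_lt hq.2⟩)).continuousWithinAt
      ⟨hp, hpU⟩
  have h2 : ContinuousWithinAt (fun p : ℝ × ℝ => θ M p.1 p.2) (Q ∩ U) p :=
    h1.congr hEq (hEq p hpQU)
  exact h2.mono_of_mem_nhdsWithin (inter_mem_nhdsWithin Q (hUopen.mem_nhds hpU))

/-- truncated cocycle, globally defined and continuous -/
noncomputable def θb (x y : ℝ) : ℝ := θ M (max x 0) (max y 0)

lemma thetab_eq {a b : ℝ} (ha : 0 ≤ a) (hb : 0 ≤ b) : θb M a b = θ M a b := by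
  rw [θb, max_eq_left ha, max_eq_left hb]

include hA hS in
lemma thetab_cocycle {a b c : ℝ} (ha : 0 ≤ a) (hb : 0 ≤ b) (hc : 0 ≤ c) :
    θb M a b + θb M (a+b) c = θb M a (b+c) + θb M b c := by
  rw [thetab_eq M ha hb, thetab_eq M (by positivity) hc, thetab_eq M ha (by positivity),
    thetab_eq M hb hc]
  exact theta_cocycle M hA hS ha hb hc

include hA hS in
lemma thetab_zero_left (b : ℝ) : θb M 0 b = 0 := by
  rw [θb, max_self]
  exact theta_zero_left M hA hS (le_max_right _ _)

include hA hS in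
lemma cont_thetab (hC : ∀ N : ℕ, ContinuousOn (M N) {P : Fin N → ℝ | IsCountingVector P}) :
    Continuous (fun q : ℝ × ℝ => θb M q.1 q.2) := by
  have h := contOn_theta M hA hS hC
  have hg : Continuous (fun q : ℝ × ℝ => ((max q.1 0, max q.2 0) : ℝ × ℝ)) := by fun_prop
  have h2 := h.comp_continuous hg (fun q => ⟨le_max_right _ _, le_max_right _ _⟩)
  have he : (fun q : ℝ × ℝ => θb M q.1 q.2)
      = (fun p : ℝ × ℝ => θ M p.1 p.2) ∘ (fun q : ℝ × ℝ => (max q.1 0, max q.2 0)) := by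
    funext q
    simp only [Function.comp_apply, θb]
  rw [he]
  exact h2

noncomputable def hInt (x : ℝ) : ℝ := ∫ s in (0:ℝ)..1, θb M x s
noncomputable def LInt (x : ℝ) : ℝ := ∫ u in (0:ℝ)..x, θb M u 1
noncomputable def φ (x : ℝ) : ℝ := hInt M x - LInt M x

include hA hS in
lemma coboundary (hθb : Continuous (fun q : ℝ × ℝ => θb M q.1 q.2))
    {a b : ℝ} (ha : 0 ≤ a) (hb : 0 ≤ b) :
    θ M a b = φ M a + φ M b - φ M (a+b) := by
  have key : ∀ (f : ℝ → ℝ × ℝ), Continuous f →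
      Continuous (fun s => θb M (f s).1 (f s).2) := fun f hf => hθb.comp hf
  set G : ℝ → ℝ := fun y => ∫ u in (0:ℝ)..y, θb M a u with hG
  have intau : IntervalIntegrable (fun u => θb M a u) MeasureTheory.volume 0 b ∧
      IntervalIntegrable (fun u => θb M a u) MeasureTheory.volume 0 (b+1) ∧
      IntervalIntegrable (fun u => θb M a u) MeasureTheory.volume 0 1 := by
    refine ⟨?_, ?_, ?_⟩ <;>
      exact (key (fun s => (a, s)) (by fun_prop)).intervalIntegrable _ _
  have intu1 : ∀ c d : ℝ, IntervalIntegrable (fun u => θb M u 1) MeasureTheory.volume c d :=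
    fun c d => (key (fun s => (s, 1)) (by fun_prop)).intervalIntegrable _ _
  -- (ii): integrate the cocycle in its third slot over [0,1]
  have e1 : ∫ s in (0:ℝ)..1, (θb M a b + θb M (a+b) s)
      = ∫ s in (0:ℝ)..1, (θb M a (b+s) + θb M b s) := by
    apply intervalIntegral.integral_congr
    intro s hs
    rw [Set.uIcc_of_le (by norm_num : (0:ℝ) ≤ 1)] at hs
    exact thetab_cocycle M hA hS ha hb hs.1
  have l1 : ∫ s in (0:ℝ)..1, (θb M a b + θb M (a+b) s) = θb M a b + hInt M (a+b) := by
    rw [intervalIntegral.integral_add intervalIntegrable_const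
      ((key (fun s => ((a+b), s)) (by fun_prop)).intervalIntegrable 0 1)]
    simp [hInt]
  have r1 : ∫ s in (0:ℝ)..1, (θb M a (b+s) + θb M b s) = (G (b+1) - G b) + hInt M b := by
    rw [intervalIntegral.integral_add
      ((key (fun s => (a, b+s)) (by fun_prop)).intervalIntegrable 0 1)
      ((key (fun s => (b, s)) (by fun_prop)).intervalIntegrable 0 1)]
    congr 1
    have h1 : ∫ s in (0:ℝ)..1, θb M a (b+s) = ∫ u in (b+0)..(b+1), θb M a u :=
      intervalIntegral.integral_comp_add_left (fun u => θb M a u) b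
    have h2 : G (b+1) - G b = ∫ u in b..(b+1), θb M a u :=
      intervalIntegral.integral_interval_sub_left intau.2.1 intau.1
    rw [h1, h2]
    norm_num
  -- (i): integrate the cocycle in its second slot over [0,b]
  have e2 : ∫ u in (0:ℝ)..b, (θb M a u + θb M (a+u) 1)
      = ∫ u in (0:ℝ)..b, (θb M a (u+1) + θb M u 1) := by
    apply intervalIntegral.integral_congr
    intro u hu
    rw [Set.uIcc_of_le hb] at hu
    exact thetab_cocycle M hA hS ha hu.1 zero_le_one
  have l2 : ∫ u in (0:ℝ)..b, (θb M a u + θb M (a+u) 1)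
      = G b + (LInt M (a+b) - LInt M a) := by
    rw [intervalIntegral.integral_add intau.1
      ((key (fun u => ((a+u), 1)) (by fun_prop)).intervalIntegrable 0 b)]
    congr 1
    have h1 : ∫ u in (0:ℝ)..b, θb M (a+u) 1 = ∫ v in (a+0)..(a+b), θb M v 1 :=
      intervalIntegral.integral_comp_add_left (fun v => θb M v 1) a
    have h2 : LInt M (a+b) - LInt M a = ∫ v in a..(a+b), θb M v 1 :=
      intervalIntegral.integral_interval_sub_left (intu1 0 (a+b)) (intu1 0 a)
    rw [h1, h2]
    norm_num
  have r2 : ∫ u in (0:ℝ)..b, (θb M a (u+1) + θb M u 1)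
      = (G (b+1) - G 1) + LInt M b := by
    rw [intervalIntegral.integral_add
      ((key (fun u => (a, u+1)) (by fun_prop)).intervalIntegrable 0 b)
      (intu1 0 b)]
    congr 1
    have h1 : ∫ u in (0:ℝ)..b, θb M a (u+1) = ∫ v in (0+1:ℝ)..(b+1), θb M a v :=
      intervalIntegral.integral_comp_add_right (fun v => θb M a v) 1
    have h2 : G (b+1) - G 1 = ∫ v in (1:ℝ)..(b+1), θb M a v :=
      intervalIntegral.integral_interval_sub_left intau.2.1 intau.2.2
    rw [h1, h2]
    norm_num
  have hG1 : G 1 = hInt M a := rfl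
  have hth : θb M a b = θ M a b := thetab_eq M ha hb
  have q1 : θb M a b + hInt M (a+b) = (G (b+1) - G b) + hInt M b := by
    rw [← l1, ← r1, e1]
  have q2 : G b + (LInt M (a+b) - LInt M a) = (G (b+1) - G 1) + LInt M b := by
    rw [← l2, ← r2, e2]
  simp only [φ]
  rw [← hth]
  rw [hG1] at q2
  linarith

include hA hS in
lemma phi_zero : φ M 0 = 0 := by
  have h1 : hInt M 0 = 0 := by
    rw [hInt]
    have : ∀ s : ℝ, θb M 0 s = 0 := fun s => thetab_zero_left M hA hS s
    simp [this]
  have h2 : LInt M 0 = 0 := by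
    rw [LInt, intervalIntegral.integral_same]
  rw [φ, h1, h2, sub_zero]

lemma phi_cont (hθb : Continuous (fun q : ℝ × ℝ => θb M q.1 q.2)) :
    Continuous (φ M) := by
  have h1 : Continuous (hInt M) := by
    apply intervalIntegral.continuous_parametric_intervalIntegral_of_continuous'
      (f := fun x s => θb M x s) hθb
  have h2 : Continuous (LInt M) := by
    apply intervalIntegral.continuous_primitive
    intro c d
    exact (hθb.comp (by fun_prop : Continuous fun s : ℝ => ((s, 1) : ℝ × ℝ))).intervalIntegrable c d
  exact h1.sub h2

/-- candidate generating function (un-normalized) -/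
noncomputable def mg (x : ℝ) : ℝ := φ M x - φ M 1

include hA hS in
lemma phi_nat (hB : ∀ N : ℕ, M (N + 1) (fun k => if k = 0 then ((N + 1 : ℕ) : ℝ) else 0) = N)
    (hθb : Continuous (fun q : ℝ × ℝ => θb M q.1 q.2)) :
    ∀ k : ℕ, φ M ((k:ℝ)+1) = ((k:ℝ)+1) * φ M 1 + k := by
  intro k
  induction k with
  | zero => simp
  | succ k ih =>
    have hrepnn : ∀ x ∈ List.replicate k (0:ℝ), 0 ≤ x := by
      intro x hx; rw [List.eq_of_mem_replicate hx]
    have hrsum : (List.replicate k (0:ℝ)).sum = 0 := by simp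
    have hfr := theta_frame M hA hS (a := (k:ℝ)+1) (b := 1) (by positivity) zero_le_one
      (l := List.replicate k 0) hrepnn (by simp; push_cast; ring)
    have htop2 : Ml M ((((k:ℝ)+1)+1) :: (0:ℝ) :: List.replicate k 0) = (k:ℝ)+1 := by
      have hl : (((k:ℝ)+1)+1) :: (0:ℝ) :: List.replicate k 0
          = (((k+1:ℕ):ℝ)+1) :: List.replicate (k+1) 0 := by
        have hc : (((k:ℝ)+1)+1) = (((k+1:ℕ)):ℝ)+1 := by push_cast; ring
        rw [List.replicate_succ, hc]
      rw [hl, Ml_top M hB (k+1)]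
      push_cast
      ring
    have htop1 : Ml M ((((k:ℝ)+1)) :: (1:ℝ) :: List.replicate k 0) = (k:ℝ) := by
      have cl1 : CL (((k:ℝ)+1) :: List.replicate k 0) := by
        constructor
        · intro x hx
          rcases List.mem_cons.mp hx with rfl | hx2
          · positivity
          · exact hrepnn _ hx2
        · simp
      have cl2 : CL [(1:ℝ)] := by
        constructor
        · intro x hx; simp at hx; rw [hx]; norm_num
        · simp
      have happ := Ml_append M hA cl1 cl2
      have hperm : ((((k:ℝ)+1)) :: (1:ℝ) :: List.replicate k 0).Perm
          (((((k:ℝ)+1)) :: List.replicate k 0) ++ [(1:ℝ)]) := by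
        apply List.Perm.cons
        exact (List.perm_append_singleton 1 _).symm
      have clsrc : CL ((((k:ℝ)+1)) :: (1:ℝ) :: List.replicate k 0) := by
        apply CL_cons2 (by positivity) zero_le_one hrepnn
        simp; push_cast; ring
      rw [Ml_perm M hS clsrc hperm, happ, Ml_one M hB]
      have hcast : ((k:ℝ)+1) = ((k:ℕ):ℝ)+1 := by push_cast; ring
      rw [hcast, Ml_top M hB k]
      ring
    have hθval : θ M ((k:ℝ)+1) 1 = -1 := by
      rw [hfr, htop1, htop2]
      ring
    have hcb := coboundary M hA hS hθb (a := (k:ℝ)+1) (b := 1) (by positivity) zero_le_one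
    rw [hθval] at hcb
    push_cast
    push_cast at ih
    linarith

include hA hS in
lemma gen_list (hB : ∀ N : ℕ, M (N + 1) (fun k => if k = 0 then ((N + 1 : ℕ) : ℝ) else 0) = N)
    (hθb : Continuous (fun q : ℝ × ℝ => θb M q.1 q.2)) :
    ∀ (l : List ℝ) (k : ℕ) (s : ℝ), 0 ≤ s → (∀ x ∈ l, 0 ≤ x) →
      s + l.sum = 1 + l.length + k →
      Ml M (s :: (l ++ List.replicate k 0)) = mg M s + (l.map (mg M)).sum + k * (mg M 0) := by
  intro l
  induction l with
  | nil =>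
    intro k s _ _ hsum
    simp only [List.sum_nil, List.length_nil, Nat.cast_zero, add_zero, zero_add] at hsum
    have hs : s = (k:ℝ) + 1 := by linarith
    have hcast : s = ((k:ℕ):ℝ) + 1 := by rw [hs]
    rw [List.nil_append, hcast, Ml_top M hB k]
    simp only [List.map_nil, List.sum_nil, add_zero]
    have hp := phi_nat M hA hS hB hθb k
    have hz := phi_zero M hA hS
    simp only [mg]
    rw [hz]
    push_cast
    linarith
  | cons b tl ih =>
    intro k s hs h0 hsum
    have hb : 0 ≤ b := h0 b List.mem_cons_self
    have htl : ∀ x ∈ tl, 0 ≤ x := fun x hx => h0 x (List.mem_cons_of_mem _ hx)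
    have htlrep : ∀ x ∈ tl ++ List.replicate k (0:ℝ), 0 ≤ x := by
      intro x hx
      rcases List.mem_append.mp hx with h | h
      · exact htl _ h
      · rw [List.eq_of_mem_replicate h]
    have hlen : ((b :: tl).length : ℝ) = (tl.length : ℝ) + 1 := by simp
    have hsum' : s + b + tl.sum = 1 + ((tl.length:ℝ) + 1) + k := by
      simp only [List.sum_cons] at hsum
      rw [hlen] at hsum
      linarith
    have hcond : s + b + (tl ++ List.replicate k (0:ℝ)).sum
        = 2 + ((tl ++ List.replicate k (0:ℝ)).length : ℝ) := by
      rw [List.sum_append, List.length_append]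
      simp only [List.sum_replicate, smul_zero, List.length_replicate, add_zero]
      push_cast
      linarith
    have hfr := theta_frame M hA hS hs hb htlrep hcond
    have hperm : ((s+b) :: (0:ℝ) :: (tl ++ List.replicate k 0)).Perm
        ((s+b) :: (tl ++ List.replicate (k+1) 0)) := by
      apply List.Perm.cons
      rw [List.replicate_succ]
      exact List.perm_middle.symm
    have clsrc : CL ((s+b) :: (0:ℝ) :: (tl ++ List.replicate k 0)) := by
      apply CL_cons2 (by positivity) le_rfl htlrep
      linarith [hcond]
    have hpm := Ml_perm M hS clsrc hperm
    have hih := ih (k+1) (s+b) (by positivity) htl (by push_cast; linarith)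
    have hcb := coboundary M hA hS hθb hs hb
    have hz := phi_zero M hA hS
    show Ml M (s :: b :: (tl ++ List.replicate k 0)) = _
    have : Ml M (s :: b :: (tl ++ List.replicate k 0))
        = θ M s b + Ml M ((s+b) :: (tl ++ List.replicate (k+1) 0)) := by
      rw [← hpm]; linarith [hfr]
    rw [this, hih, hcb]
    simp only [mg, List.map_cons, List.sum_cons, hz]
    push_cast
    ring

include hA hS in
lemma M_generating (hB : ∀ N : ℕ, M (N + 1) (fun k => if k = 0 then ((N + 1 : ℕ) : ℝ) else 0) = N)
    (hθb : Continuous (fun q : ℝ × ℝ => θb M q.1 q.2)) :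
    ∀ (N : ℕ) (P : Fin N → ℝ), IsCountingVector P → M N P = ∑ i, mg M (P i) := by
  intro N P hP
  cases N with
  | zero =>
    have hP0 : P = (([] : List ℝ)).get := funext fun i => i.elim0
    rw [hP0]
    show Ml M [] = _
    rw [Ml_nil M hA]
    simp
  | succ n =>
    have hmem : ∀ x ∈ List.ofFn (fun i : Fin n => P i.succ), 0 ≤ x := by
      intro x hx
      rw [List.mem_ofFn] at hx
      obtain ⟨i, rfl⟩ := hx
      exact hP.1 _
    have hsum : P 0 + (List.ofFn (fun i : Fin n => P i.succ)).sum
        = 1 + ((List.ofFn (fun i : Fin n => P i.succ)).length : ℝ) + ((0:ℕ):ℝ) := by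
      rw [List.sum_ofFn, List.length_ofFn]
      have := hP.2
      rw [Fin.sum_univ_succ] at this
      rw [this]
      push_cast
      ring
    have hgl := gen_list M hA hS hB hθb (List.ofFn fun i : Fin n => P i.succ) 0 (P 0)
      (hP.1 0) hmem hsum
    rw [List.replicate_zero, List.append_nil] at hgl
    have hofn : List.ofFn P = P 0 :: List.ofFn (fun i : Fin n => P i.succ) := List.ofFn_succ
    have hml : M (n+1) P = Ml M (List.ofFn P) := (Ml_ofFn M P).symm
    rw [hml, hofn, hgl, List.map_ofFn, List.sum_ofFn, Fin.sum_univ_succ]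
    simp [Function.comp]

end Theta

/-- A continuous function on `[0,∞)` vanishing at `0` and `1` that is additive on `[0,3]`
vanishes on `[0,3]`. -/
lemma d_vanish (d : ℝ → ℝ) (hc : ContinuousOn d (Set.Ici 0)) (h0 : d 0 = 0) (h1 : d 1 = 0)
    (hadd : ∀ x y : ℝ, 0 ≤ x → 0 ≤ y → x + y ≤ 3 → d (x + y) = d x + d y) :
    ∀ x : ℝ, 0 ≤ x → x ≤ 3 → d x = 0 := by
  have hmul : ∀ (k : ℕ) (x : ℝ), 0 ≤ x → (k:ℝ) * x ≤ 3 → d ((k:ℝ) * x) = (k:ℝ) * d x := by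
    intro k
    induction k with
    | zero => intro x _ _; simp [h0]
    | succ k ih =>
      intro x hx hkx
      have hcst : ((k+1:ℕ):ℝ) * x = (k:ℝ) * x + x := by push_cast; ring
      rw [hcst] at hkx ⊢
      have hk3 : (k:ℝ) * x ≤ 3 := by nlinarith
      rw [hadd _ _ (by positivity) hx (by linarith), ih x hx hk3]
      push_cast
      ring
  have hinv : ∀ n : ℕ, n ≠ 0 → d (1 / n) = 0 := by
    intro n hn
    have hnR : (0:ℝ) < n := by positivity
    have h := hmul n (1/n) (by positivity) (by rw [mul_one_div, div_self hnR.ne']; norm_num)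
    rw [mul_one_div, div_self hnR.ne', h1] at h
    rcases mul_eq_zero.mp h.symm with h' | h'
    · exact absurd h' hnR.ne'
    · exact h'
  have hrat : ∀ (k n : ℕ), n ≠ 0 → (k:ℝ)/n ≤ 3 → d ((k:ℝ)/n) = 0 := by
    intro k n hn hle
    have heq : (k:ℝ)/n = (k:ℝ) * (1/n) := by ring
    rw [heq, hmul k (1/n) (by positivity) (by rw [← heq]; exact hle), hinv n hn, mul_zero]
  intro x hx hx3
  have hseq : Filter.Tendsto (fun n : ℕ => ((⌊x * n⌋₊ : ℝ) / n)) Filter.atTop (nhds x) :=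
    (tendsto_nat_floor_mul_div_atTop hx).comp tendsto_natCast_atTop_atTop
  have hzero : ∀ n : ℕ, d ((⌊x * n⌋₊ : ℝ)/n) = 0 := by
    intro n
    rcases Nat.eq_zero_or_pos n with rfl | hn
    · simp [h0]
    · apply hrat _ _ hn.ne'
      have hfl : (⌊x * n⌋₊:ℝ) ≤ x * n := Nat.floor_le (by positivity)
      have hnR : (0:ℝ) < n := by positivity
      rw [div_le_iff₀ hnR]
      nlinarith
  have hcw : ContinuousWithinAt d (Set.Ici 0) x := hc x hx
  have htw : Filter.Tendsto (fun n : ℕ => ((⌊x * n⌋₊ : ℝ)/n)) Filter.atTop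
      (nhdsWithin x (Set.Ici 0)) := by
    rw [tendsto_nhdsWithin_iff]
    exact ⟨hseq, Filter.Eventually.of_forall (fun n => Set.mem_Ici.mpr (by positivity))⟩
  have hlim := hcw.tendsto.comp htw
  have hlim0 : Filter.Tendsto (fun n : ℕ => d ((⌊x * n⌋₊ : ℝ)/n)) Filter.atTop (nhds 0) := by
    simp only [hzero]
    exact tendsto_const_nhds
  exact tendsto_nhds_unique hlim hlim0

end CoENFAux

theorem coENF_unique_continuous_generating (M : ∀ N : ℕ, (Fin N → ℝ) → ℝ)
    (hM : IsCoENF M) (t : ℝ) :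
    ∃ m : ℝ → ℝ,
      (ContinuousOn m (Set.Ici 0) ∧ m 0 = t ∧
        ∀ (N : ℕ) (P : Fin N → ℝ), IsCountingVector P → M N P = ∑ i, m (P i)) ∧
      ∀ m' : ℝ → ℝ,
        (ContinuousOn m' (Set.Ici 0) ∧ m' 0 = t ∧
          ∀ (N : ℕ) (P : Fin N → ℝ), IsCountingVector P → M N P = ∑ i, m' (P i)) →
        ∀ p : ℝ, 0 ≤ p → m' p = m p := by
  classical
  obtain ⟨hA, hS, hC, _, hB⟩ := hM
  have hθb := CoENFAux.cont_thetab M hA hS hC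
  have hgenm := CoENFAux.M_generating M hA hS hB hθb
  have hmgcont : Continuous (CoENFAux.mg M) := by
    have hphic := CoENFAux.phi_cont M hθb
    have : CoENFAux.mg M = fun x => CoENFAux.φ M x - CoENFAux.φ M 1 := rfl
    rw [this]
    exact hphic.sub continuous_const
  set m : ℝ → ℝ := fun p => CoENFAux.mg M p + (t - CoENFAux.mg M 0) * (1 - p) with hm
  have hmcont : Continuous m :=
    hmgcont.add (continuous_const.mul (continuous_const.sub continuous_id))
  have hm0 : m 0 = t := by simp [hm]
  have hmgen : ∀ (N : ℕ) (P : Fin N → ℝ), IsCountingVector P → M N P = ∑ i, m (P i) := by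
    intro N P hP
    rw [hgenm N P hP]
    have hsplit : ∑ i, m (P i)
        = (∑ i, CoENFAux.mg M (P i)) + (t - CoENFAux.mg M 0) * ((N:ℝ) - ∑ i, P i) := by
      simp only [hm]
      rw [Finset.sum_add_distrib, ← Finset.mul_sum]
      congr 1
      rw [Finset.sum_sub_distrib, Finset.sum_const, Finset.card_univ]
      simp [mul_sub]
    rw [hsplit, hP.2]
    ring
  refine ⟨m, ⟨hmcont.continuousOn, hm0, hmgen⟩, ?_⟩
  rintro m' ⟨hc', h0', hgen'⟩ p hp
  set d : ℝ → ℝ := fun x => m' x - m x with hd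
  have hdc : ContinuousOn d (Set.Ici 0) := hc'.sub hmcont.continuousOn
  have hd0 : d 0 = 0 := by simp [hd, h0', hm0]
  have hdsum : ∀ (N : ℕ) (P : Fin N → ℝ), IsCountingVector P → ∑ i, d (P i) = 0 := by
    intro N P hP
    simp only [hd]
    rw [Finset.sum_sub_distrib, ← hgen' N P hP, ← hmgen N P hP, sub_self]
  have hd1 : d 1 = 0 := by
    have hcv : IsCountingVector (fun _ : Fin 1 => (1:ℝ)) := ⟨fun _ => zero_le_one, by simp⟩
    have := hdsum 1 _ hcv
    simpa using this
  have hd3 : ∀ x y : ℝ, 0 ≤ x → 0 ≤ y → x + y ≤ 3 → d x + d y + d (3 - x - y) = 0 := by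
    intro x y hx hy hxy
    have hcv : IsCountingVector (![x, y, 3 - x - y]) := by
      constructor
      · intro i
        fin_cases i <;> simp <;> linarith
      · rw [Fin.sum_univ_three]
        simp
        try norm_num
        try ring_nf
    have := hdsum 3 _ hcv
    rw [Fin.sum_univ_three] at this
    simpa using this
  have hdadd : ∀ x y : ℝ, 0 ≤ x → 0 ≤ y → x + y ≤ 3 → d (x + y) = d x + d y := by
    intro x y hx hy hxy
    have e1 := hd3 x y hx hy hxy
    have e2 := hd3 (x+y) 0 (by positivity) le_rfl (by linarith)
    have h30 : 3 - (x+y) - 0 = 3 - x - y := by ring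
    rw [h30, hd0] at e2
    linarith
  have hvan := CoENFAux.d_vanish d hdc hd0 hd1 hdadd
  -- conclude for arbitrary p ≥ 0 using a long counting vector
  set n : ℕ := ⌈p⌉₊ + 1 with hn
  have hnR : (1:ℝ) ≤ (n:ℝ) := by
    rw [hn]; push_cast; linarith [Nat.cast_nonneg (α := ℝ) ⌈p⌉₊]
  have hpn : p ≤ (n:ℝ) := by
    rw [hn]; push_cast; linarith [Nat.le_ceil p]
  set u : ℝ := ((n:ℝ) + 1 - p) / n with hu
  have hu0 : 0 ≤ u := by
    apply div_nonneg _ (by linarith)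
    linarith
  have hu3 : u ≤ 3 := by
    rw [hu, div_le_iff₀ (by linarith)]
    nlinarith
  have hcv : IsCountingVector (fun i : Fin (n+1) => if i = 0 then p else u) := by
    constructor
    · intro i
      by_cases h : i = 0 <;> simp [h, hp, hu0]
    · rw [Fin.sum_univ_succ]
      simp only [if_pos rfl]
      have htail : ∀ i : Fin n, (if (i.succ : Fin (n+1)) = 0 then p else u) = u :=
        fun i => if_neg (Fin.succ_ne_zero i)
      rw [Finset.sum_congr rfl (fun i _ => htail i), Finset.sum_const, Finset.card_univ]
      simp only [Fintype.card_fin, nsmul_eq_mul]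
      rw [hu]
      field_simp
      try push_cast
      try ring
  have hs := hdsum (n+1) _ hcv
  rw [Fin.sum_univ_succ] at hs
  simp only [if_pos rfl] at hs
  have htail : ∀ i : Fin n, d (if (i.succ : Fin (n+1)) = 0 then p else u) = d u :=
    fun i => by rw [if_neg (Fin.succ_ne_zero i)]
  rw [Finset.sum_congr rfl (fun i _ => htail i), Finset.sum_const, Finset.card_univ] at hs
  have hduz : d u = 0 := hvan u hu0 hu3
  rw [hduz] at hs
  simp at hs
  have : d p = 0 := hs
  have := this
  simp only [hd] at this
  linarith
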